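/- Let v ∈ ℝ^D be nonzero with R := max_d |v_d| and let Q[v] be its randomized ternary coding. Then the expected squared compression error is bounded by E[‖Q[v] − v‖₂²] ≤ (√D − 1) · ‖v‖₂²; i.e., the randomized ternary coding satisfies the bounded-compression-error assumption with constant C_q = √D − 1. -/
import Mathlib


open MeasureTheory

lemma ternary_point_identity (R x : ℝ) (hR : 0 < R) :
    (|x| / R) * (R * Real.sign x - x) ^ 2 + (1 - |x| / R) * ((0 : ℝ) - x) ^ 2
      = |x| * R - x ^ 2 := by
  rcases lt_trichotomy x 0 with h | h | h
  · rw [Real.sign_of_neg h, abs_of_neg h]; field_simp; ring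
  · simp [h]
  · rw [Real.sign_of_pos h, abs_of_pos h]; field_simp; ring

/-- For the randomized ternary coding `Q` of a nonzero vector `v`
with `R = max_d |v d|`, the expected squared compression error is bounded as
`E[‖Q[v] - v‖₂²] ≤ (√D - 1) * ‖v‖₂²`, i.e. the ternary coding satisfies the
bounded-compression-error assumption with constant `C_q = √D - 1`. -/
theorem ternary_coding_compression_error_bound
    {D : ℕ} {Ω : Type*} [MeasurableSpace Ω]
    (μ : Measure Ω) [IsProbabilityMeasure μ]
    (v : EuclideanSpace ℝ (Fin D)) (hv : v ≠ 0)
    (R : ℝ) (hR : IsGreatest (Set.range fun d => |v d|) R)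
    (Q : Ω → EuclideanSpace ℝ (Fin D)) (hQmeas : Measurable Q)
    (hlaw : ∀ d : Fin D,
      Measure.map (fun ω => Q ω d) μ =
        ENNReal.ofReal (|v d| / R) • Measure.dirac (R * Real.sign (v d)) +
        ENNReal.ofReal (1 - |v d| / R) • Measure.dirac (0 : ℝ)) :
    ∫ ω, ‖Q ω - v‖ ^ 2 ∂μ ≤ (Real.sqrt D - 1) * ‖v‖ ^ 2 := by
  obtain ⟨d1, hd1⟩ : ∃ d, v d ≠ 0 := by
    by_contra h
    push_neg at h
    exact hv (by ext d; simpa using h d)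
  have hRub : ∀ d, |v d| ≤ R := fun d => hR.2 (Set.mem_range_self d)
  have hRpos : 0 < R := lt_of_lt_of_le (abs_pos.mpr hd1) (hRub d1)
  have hQd : ∀ d : Fin D, Measurable fun ω => Q ω d := fun d =>
    ((EuclideanSpace.proj (𝕜 := ℝ) d).continuous.measurable).comp hQmeas
  have key : ∀ d : Fin D,
      Integrable (fun ω => (Q ω d - v d) ^ 2) μ ∧
      ∫ ω, (Q ω d - v d) ^ 2 ∂μ = |v d| * R - (v d) ^ 2 := by
    intro d
    set g : ℝ → ℝ := fun x => (x - v d) ^ 2 with hgdef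
    have hgm : Measurable g := by fun_prop
    have hint1 : Integrable g (Measure.dirac (R * Real.sign (v d))) :=
      (integrable_const _).congr (ae_eq_dirac g).symm
    have hint2 : Integrable g (Measure.dirac (0 : ℝ)) :=
      (integrable_const _).congr (ae_eq_dirac g).symm
    have hi1 := hint1.smul_measure (c := ENNReal.ofReal (|v d| / R)) ENNReal.ofReal_ne_top
    have hi2 := hint2.smul_measure (c := ENNReal.ofReal (1 - |v d| / R)) ENNReal.ofReal_ne_top
    have hIntMap : Integrable g (Measure.map (fun ω => Q ω d) μ) := by
      rw [hlaw d]; exact hi1.add_measure hi2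
    have hIntμ : Integrable (fun ω => g (Q ω d)) μ :=
      (integrable_map_measure hgm.aestronglyMeasurable (hQd d).aemeasurable).mp hIntMap
    refine ⟨hIntμ, ?_⟩
    have hmapint := integral_map (μ := μ) (hQd d).aemeasurable hgm.aestronglyMeasurable
    have hval : ∫ y, g y ∂(Measure.map (fun ω => Q ω d) μ) = |v d| * R - (v d) ^ 2 := by
      rw [hlaw d, integral_add_measure hi1 hi2, integral_smul_measure, integral_smul_measure,
        integral_dirac, integral_dirac,
        ENNReal.toReal_ofReal (by positivity),
        ENNReal.toReal_ofReal (sub_nonneg.mpr ((div_le_one hRpos).mpr (hRub d)))]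
      simp only [hgdef, smul_eq_mul]
      exact ternary_point_identity R (v d) hRpos
    rw [← hmapint]; exact hval
  have hnorm : ∀ w : EuclideanSpace ℝ (Fin D), ‖w‖ ^ 2 = ∑ d, (w d) ^ 2 := by
    intro w
    rw [EuclideanSpace.norm_eq, Real.sq_sqrt (Finset.sum_nonneg fun _ _ => by positivity)]
    simp [sq_abs]
  have hsum0 : (0 : ℝ) ≤ ∑ d, |v d| := Finset.sum_nonneg fun _ _ => abs_nonneg _
  have hCS : ∑ d, |v d| ≤ Real.sqrt D * ‖v‖ := by
    have h1 : (∑ d, |v d|) ^ 2 ≤ (D : ℝ) * ∑ d, (v d) ^ 2 := by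
      have := sq_sum_le_card_mul_sum_sq (s := (Finset.univ : Finset (Fin D)))
        (f := fun d => |v d|)
      simpa [sq_abs] using this
    calc ∑ d, |v d| = Real.sqrt ((∑ d, |v d|) ^ 2) := (Real.sqrt_sq hsum0).symm
      _ ≤ Real.sqrt ((D : ℝ) * ∑ d, (v d) ^ 2) := Real.sqrt_le_sqrt h1
      _ = Real.sqrt D * ‖v‖ := by
          rw [Real.sqrt_mul (Nat.cast_nonneg D), ← hnorm v, Real.sqrt_sq (norm_nonneg v)]
  have hRle : R ≤ ‖v‖ := by
    obtain ⟨d0, hd0⟩ := hR.1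
    simp only at hd0
    rw [← hd0]
    have hle : (v d0) ^ 2 ≤ ‖v‖ ^ 2 := by
      rw [hnorm v]
      exact Finset.single_le_sum (f := fun d => (v d) ^ 2) (fun _ _ => by positivity)
        (Finset.mem_univ d0)
    calc |v d0| = Real.sqrt ((v d0) ^ 2) := (Real.sqrt_sq_eq_abs _).symm
      _ ≤ Real.sqrt (‖v‖ ^ 2) := Real.sqrt_le_sqrt hle
      _ = ‖v‖ := Real.sqrt_sq (norm_nonneg v)
  have hmain : ∫ ω, ‖Q ω - v‖ ^ 2 ∂μ = R * (∑ d, |v d|) - ∑ d, (v d) ^ 2 := by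
    calc ∫ ω, ‖Q ω - v‖ ^ 2 ∂μ = ∫ ω, ∑ d, (Q ω d - v d) ^ 2 ∂μ := by
          refine integral_congr_ae (Filter.Eventually.of_forall fun ω => ?_)
          show ‖Q ω - v‖ ^ 2 = ∑ d, (Q ω d - v d) ^ 2
          rw [hnorm (Q ω - v)]
          simp
      _ = ∑ d, ∫ ω, (Q ω d - v d) ^ 2 ∂μ := integral_finset_sum _ fun d _ => (key d).1
      _ = ∑ d, (|v d| * R - (v d) ^ 2) := Finset.sum_congr rfl fun d _ => (key d).2
      _ = R * (∑ d, |v d|) - ∑ d, (v d) ^ 2 := by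
          rw [Finset.sum_sub_distrib, Finset.mul_sum]
          congr 1
          exact Finset.sum_congr rfl fun d _ => mul_comm _ _
  rw [hmain]
  have hmul : R * (∑ d, |v d|) ≤ ‖v‖ * (Real.sqrt D * ‖v‖) :=
    mul_le_mul hRle hCS hsum0 (norm_nonneg v)
  have hveq : ∑ d, (v d) ^ 2 = ‖v‖ ^ 2 := (hnorm v).symm
  nlinarith [hmul, hveq]
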